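/- Every infinite compact Hausdorff scattered topological space contains a non-trivial convergent sequence, i.e. there exists a sequence (x_n) of points of the space and a point x such that (x_n) converges to x and (x_n) is not eventually constant. -/

import Mathlib

open Filter Topology Set

/-- Every infinite compact Hausdorff scattered space (every nonempty closed subset
has a point isolated in the subspace topology) contains a non-trivial convergent
sequence. -/
theorem scattered_has_nontrivial_convergent_sequence
    {X : Type*} [TopologicalSpace X] [CompactSpace X] [T2Space X] [Infinite X]
    (hscat : ∀ C : Set X, IsClosed C → C.Nonempty →
      ∃ x ∈ C, ∃ U : Set X, IsOpen U ∧ U ∩ C = {x}) :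
    ∃ (u : ℕ → X) (a : X), Tendsto u atTop (𝓝 a) ∧
      ¬ ∃ c : X, ∀ᶠ n in atTop, u n = c := by
  -- D: set of isolated points
  set D : Set X := {x : X | IsOpen ({x} : Set X)} with hD
  have hDopen : IsOpen D := by
    have : D = ⋃ x ∈ D, {x} := by
      ext y; simp [hD]
    rw [this]
    exact isOpen_biUnion fun x hx => hx
  -- C = Dᶜ is closed and nonempty
  have hCclosed : IsClosed Dᶜ := hDopen.isClosed_compl
  have hCne : Dᶜ.Nonempty := by
    by_contra h
    rw [not_nonempty_iff_eq_empty, compl_empty_iff] at h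
    have : DiscreteTopology X := discreteTopology_iff_isOpen_singleton.mpr
      (fun a => by have : a ∈ D := h ▸ mem_univ a; exact this)
    have : Finite X := finite_of_compact_of_discrete
    exact not_finite X
  obtain ⟨a, haC, U, hUopen, hUC⟩ := hscat Dᶜ hCclosed hCne
  have haU : a ∈ U := by
    have : a ∈ U ∩ Dᶜ := hUC ▸ rfl
    exact this.1
  -- closed neighborhood K ⊆ U of a
  obtain ⟨K, hKnhds, hKclosed, hKU⟩ :=
    exists_mem_nhds_isClosed_subset (hUopen.mem_nhds haU)
  have hKcomp : IsCompact K := hKclosed.isCompact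
  -- points of U other than a are isolated
  have hiso : ∀ b ∈ U, b ≠ a → IsOpen ({b} : Set X) := by
    intro b hb hba
    by_contra hbD
    have : b ∈ U ∩ Dᶜ := ⟨hb, hbD⟩
    rw [hUC] at this
    exact hba this
  -- a is not isolated, so punctured neighborhoods are nontrivial
  have hnb : NeBot (𝓝[≠] a) := by
    rw [neBot_iff, ne_eq, ← isOpen_singleton_iff_punctured_nhds]
    exact haC
  have hKinf : (K \ {a}).Infinite := by
    have := infinite_of_mem_nhds a hKnhds
    exact this.diff (finite_singleton a)
  -- choose an injective sequence in K \ {a}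
  obtain ⟨e⟩ := hKinf.to_subtype.nonempty
  set f := hKinf.natEmbedding
  refine ⟨fun n => (f n : X), a, ?_, ?_⟩
  · -- convergence to a
    by_contra h
    rw [tendsto_iff_forall_eventually_mem] at h
    push_neg at h
    obtain ⟨W, hW, hfreq⟩ := h
    obtain ⟨φ, hφmono, hφ⟩ := extraction_of_frequently_atTop hfreq
    -- the subsequence lies in the compact set K \ interior W
    set W' := interior W with hW'
    have haW' : a ∈ W' := mem_interior_iff_mem_nhds.mpr hW
    have hsub : ∀ n, (f (φ n) : X) ∈ K \ W' := by
      intro n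
      refine ⟨(f (φ n)).2.1, fun hmem => hφ n (interior_subset hmem)⟩
    have hcomp : IsCompact (K \ W') := hKcomp.diff isOpen_interior
    have hle : map (fun n => (f (φ n) : X)) atTop ≤ 𝓟 (K \ W') := by
      rw [le_principal_iff, mem_map]
      exact Eventually.of_forall hsub
    obtain ⟨b, hbmem, hbcl⟩ := hcomp.exists_clusterPt hle
    have hbne : b ≠ a := fun hba => hbmem.2 (hba ▸ haW')
    have hbiso : IsOpen ({b} : Set X) := hiso b (hKU hbmem.1) hbne
    -- cluster at isolated point b means the sequence is frequently b
    have hfb : ∃ᶠ n in atTop, (f (φ n) : X) ∈ ({b} : Set X) :=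
      mapClusterPt_iff_frequently.mp hbcl _ (hbiso.mem_nhds rfl)
    obtain ⟨m, hm⟩ := hfb.exists
    obtain ⟨k, hk, hkm⟩ := (hfb.and_eventually (eventually_gt_atTop m)).exists
    have heq : f (φ m) = f (φ k) := Subtype.ext (by
      simp only [mem_singleton_iff] at hm hk
      rw [hm, hk])
    have : m = k := hφmono.injective (f.injective heq)
    omega
  · rintro ⟨c, hc⟩
    obtain ⟨N, hN⟩ := eventually_atTop.mp hc
    have h1 : (f N : X) = c := hN N le_rfl
    have h2 : (f (N + 1) : X) = c := hN (N + 1) (Nat.le_succ N)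
    have : f N = f (N + 1) := Subtype.ext (h1.trans h2.symm)
    exact Nat.succ_ne_self N (f.injective this).symm
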